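/- Let G=(V,E) be a finite simple undirected graph, let A ⊆ V be nonempty, and let T be a nonnegative integer. For a vertex x, let esc(x,T,A) be the probability that a lazy random walk started from x leaves A within the first T steps. Then (1/μ(A)) · Σ_{x∈A} d(x) · esc(x,T,A) ≤ T·φ(A)/2. -/

import Mathlib

open scoped Classical symmDiff

noncomputable section

variable {V : Type*} [Fintype V] [DecidableEq V]

/-- The volume `μ(S)` of a set of vertices: the sum of the degrees. -/
def vol (G : SimpleGraph V) [DecidableRel G.Adj] (S : Finset V) : ℝ :=
  ∑ x ∈ S, (G.degree x : ℝ)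

/-- The number of edges leaving `S`, i.e. `∂(S) = e(S, Sᶜ)`. -/
def bdry (G : SimpleGraph V) [DecidableRel G.Adj] (S : Finset V) : ℝ :=
  ∑ x ∈ S, ((Sᶜ.filter (G.Adj x)).card : ℝ)

/-- The conductance `φ(S) = ∂(S)/μ(S)`. -/
def phiCond (G : SimpleGraph V) [DecidableRel G.Adj] (S : Finset V) : ℝ :=
  bdry G S / vol G S

/-- The lazy random walk kernel `p(x,y)`: `1/2` if `x = y`, `1/(2 d(x))` if `x ~ y`,
and `0` otherwise. -/
def walkP (G : SimpleGraph V) [DecidableRel G.Adj] (x y : V) : ℝ :=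
  if x = y then 1/2 else if G.Adj x y then 1 / (2 * (G.degree x : ℝ)) else 0

/-- `p(x,S) = Σ_{y∈S} p(x,y)`. -/
def pset (G : SimpleGraph V) [DecidableRel G.Adj] (x : V) (S : Finset V) : ℝ :=
  ∑ y ∈ S, walkP G x y

/-- One step of the evolving set process from `S` with threshold `u`:
`S₁ = {y : p(y,S) ≥ u}`. -/
def esStep (G : SimpleGraph V) [DecidableRel G.Adj] (S : Finset V) (u : ℝ) : Finset V :=
  Finset.univ.filter fun y => u ≤ pset G y S

/-- The ESP transition kernel `K(S,S')`: the probability, for a uniform threshold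
`U ∈ [0,1]`, that `{y : p(y,S) ≥ U} = S'`. -/
def Kk (G : SimpleGraph V) [DecidableRel G.Adj] (S S' : Finset V) : ℝ :=
  (MeasureTheory.volume {u : ℝ | u ∈ Set.Icc (0:ℝ) 1 ∧ esStep G S u = S'}).toReal

/-- The volume-biased ESP transition kernel `K̂(S,S') = (μ(S')/μ(S)) K(S,S')`. -/
def Khat (G : SimpleGraph V) [DecidableRel G.Adj] (S S' : Finset V) : ℝ :=
  vol G S' / vol G S * Kk G S S'

/-- `esc(x,T,A)`: the probability that the lazy random walk started from `x`
leaves `A` within the first `T` steps. -/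
def escProb (G : SimpleGraph V) [DecidableRel G.Adj] (x : V) (T : ℕ) (A : Finset V) : ℝ :=
  ∑ v : Fin (T+1) → V,
    if v 0 = x ∧ ∃ j : Fin (T+1), v j ∉ A
    then ∏ j : Fin T, walkP G (v j.castSucc) (v j.succ) else 0

section Aux
set_option linter.unusedSectionVars false

variable (G : SimpleGraph V) [DecidableRel G.Adj]

lemma walkP_nonneg (x y : V) : 0 ≤ walkP G x y := by
  unfold walkP; split_ifs <;> positivity

lemma walkP_rev (x y : V) :
    (G.degree x : ℝ) * walkP G x y = (G.degree y : ℝ) * walkP G y x := by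
  unfold walkP
  by_cases h : x = y
  · subst h; simp
  · simp only [h, Ne.symm h, if_false]
    by_cases hadj : G.Adj x y
    · have hx : (G.degree x : ℝ) ≠ 0 := by
        have := G.degree_pos_iff_exists_adj x |>.mpr ⟨y, hadj⟩
        positivity
      have hy : (G.degree y : ℝ) ≠ 0 := by
        have := G.degree_pos_iff_exists_adj y |>.mpr ⟨x, hadj.symm⟩
        positivity
      simp only [hadj, hadj.symm, if_true]
      field_simp
    · have : ¬ G.Adj y x := fun h' => hadj h'.symm
      simp [hadj, this]

lemma sum_walkP_le_one (x : V) : ∑ y : V, walkP G x y ≤ 1 := by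
  rw [← Finset.sum_erase_add _ _ (Finset.mem_univ x)]
  have h1 : walkP G x x = 1/2 := by simp [walkP]
  have h2 : ∑ y ∈ Finset.univ.erase x, walkP G x y
      = ((G.neighborFinset x).card : ℝ) * (1 / (2 * (G.degree x : ℝ))) := by
    have : ∀ y ∈ Finset.univ.erase x, walkP G x y
        = if G.Adj x y then (1 / (2 * (G.degree x : ℝ))) else 0 := by
      intro y hy
      have : x ≠ y := fun h => (Finset.mem_erase.mp hy).1 h.symm
      simp [walkP, this]
    rw [Finset.sum_congr rfl this, Finset.sum_ite, Finset.sum_const_zero, add_zero,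
      Finset.sum_const, nsmul_eq_mul]
    congr 2
    rw [SimpleGraph.neighborFinset_eq_filter]
    congr 1
    ext y
    simp only [Finset.mem_filter, Finset.mem_erase, Finset.mem_univ, true_and, and_true]
    exact ⟨fun h => h.2, fun h => ⟨(G.ne_of_adj h).symm, h⟩⟩
  rw [h1, h2, SimpleGraph.card_neighborFinset_eq_degree]
  rcases Nat.eq_zero_or_pos (G.degree x) with h | h
  · simp [h]; norm_num
  · have hx : (G.degree x : ℝ) ≠ 0 := by positivity
    have : (G.degree x : ℝ) * (1 / (2 * (G.degree x : ℝ))) = 1/2 := by field_simp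
    rw [this]; norm_num

lemma pset_nonneg (x : V) (S : Finset V) : 0 ≤ pset G x S :=
  Finset.sum_nonneg fun y _ => walkP_nonneg G x y

lemma pset_le_one (x : V) (S : Finset V) : pset G x S ≤ 1 :=
  le_trans (Finset.sum_le_sum_of_subset_of_nonneg (Finset.subset_univ S)
    (fun y _ _ => walkP_nonneg G x y)) (sum_walkP_le_one G x)

def pathMass (G : SimpleGraph V) [DecidableRel G.Adj] (x : V) (T : ℕ) : ℝ :=
  ∑ v : Fin (T+1) → V,
    if v 0 = x then ∏ j : Fin T, walkP G (v j.castSucc) (v j.succ) else 0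

lemma sum_paths_succ {T : ℕ} (F : (Fin (T+2) → V) → ℝ) :
    ∑ v : Fin (T+2) → V, F v = ∑ y : V, ∑ w : Fin (T+1) → V, F (Fin.cons y w) := by
  rw [← Equiv.sum_comp (Fin.consEquiv (fun _ : Fin (T+2) => V)) F, Fintype.sum_prod_type]
  rfl

lemma prod_cons {T : ℕ} (y : V) (w : Fin (T+1) → V) :
    (∏ j : Fin (T+1), walkP G ((Fin.cons y w : Fin (T+2) → V) j.castSucc)
      ((Fin.cons y w : Fin (T+2) → V) j.succ))
    = walkP G y (w 0) * ∏ j : Fin T, walkP G (w j.castSucc) (w j.succ) := by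
  rw [Fin.prod_univ_succ]
  have h0 : walkP G ((Fin.cons y w : Fin (T+2) → V) (Fin.castSucc 0))
      ((Fin.cons y w : Fin (T+2) → V) (Fin.succ 0)) = walkP G y (w 0) := by
    rw [Fin.castSucc_zero, Fin.cons_zero, Fin.cons_succ]
  rw [h0]
  congr 1

lemma pathMass_succ (x : V) (T : ℕ) :
    pathMass G x (T+1) = ∑ y : V, walkP G x y * pathMass G y T := by
  unfold pathMass
  rw [sum_paths_succ]
  have lhs : ∀ y : V, (∑ w : Fin (T+1) → V,
      if (Fin.cons y w : Fin (T+2) → V) 0 = x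
      then ∏ j : Fin (T+1), walkP G ((Fin.cons y w : Fin (T+2) → V) j.castSucc)
        ((Fin.cons y w : Fin (T+2) → V) j.succ) else 0)
      = if y = x then ∑ w : Fin (T+1) → V,
          walkP G y (w 0) * ∏ j : Fin T, walkP G (w j.castSucc) (w j.succ) else 0 := by
    intro y
    split_ifs with h
    · refine Finset.sum_congr rfl fun w _ => ?_
      rw [Fin.cons_zero, if_pos h, prod_cons]
    · refine Finset.sum_eq_zero fun w _ => ?_
      rw [Fin.cons_zero, if_neg h]
  rw [Finset.sum_congr rfl fun y _ => lhs y, Finset.sum_ite_eq' Finset.univ x, if_pos (Finset.mem_univ x)]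
  have rhs : ∀ y : V, (walkP G x y * ∑ w : Fin (T+1) → V,
      if w 0 = y then ∏ j : Fin T, walkP G (w j.castSucc) (w j.succ) else 0)
      = ∑ w : Fin (T+1) → V,
        if w 0 = y then walkP G x y * ∏ j : Fin T, walkP G (w j.castSucc) (w j.succ) else 0 := by
    intro y
    rw [Finset.mul_sum]
    exact Finset.sum_congr rfl fun w _ => by rw [mul_ite, mul_zero]
  rw [Finset.sum_congr rfl fun y _ => rhs y, Finset.sum_comm]
  refine Finset.sum_congr rfl fun w _ => ?_
  rw [Finset.sum_ite_eq Finset.univ (w 0), if_pos (Finset.mem_univ _)]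

lemma pathMass_zero (x : V) : pathMass G x 0 = 1 := by
  unfold pathMass
  rw [← Equiv.sum_comp (Equiv.funUnique (Fin 1) V).symm]
  simp

lemma pathMass_nonneg (x : V) (T : ℕ) : 0 ≤ pathMass G x T :=
  Finset.sum_nonneg fun v _ => by
    split_ifs
    · exact Finset.prod_nonneg fun j _ => walkP_nonneg G _ _
    · exact le_refl 0

lemma pathMass_le_one (x : V) (T : ℕ) : pathMass G x T ≤ 1 := by
  induction T generalizing x with
  | zero => rw [pathMass_zero]
  | succ T ih =>
    rw [pathMass_succ]
    calc ∑ y : V, walkP G x y * pathMass G y T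
        ≤ ∑ y : V, walkP G x y * 1 :=
          Finset.sum_le_sum fun y _ =>
            mul_le_mul_of_nonneg_left (ih y) (walkP_nonneg G x y)
      _ ≤ 1 := by simpa using sum_walkP_le_one G x

lemma escProb_nonneg (x : V) (T : ℕ) (A : Finset V) : 0 ≤ escProb G x T A :=
  Finset.sum_nonneg fun v _ => by
    split_ifs
    · exact Finset.prod_nonneg fun j _ => walkP_nonneg G _ _
    · exact le_refl 0

lemma escProb_le_pathMass (x : V) (T : ℕ) (A : Finset V) :
    escProb G x T A ≤ pathMass G x T := by
  refine Finset.sum_le_sum fun v _ => ?_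
  split_ifs with h1 h2
  · exact le_refl _
  · exact absurd h1.1 h2
  · exact Finset.prod_nonneg fun j _ => walkP_nonneg G _ _
  · exact le_refl 0

lemma escProb_le_one (x : V) (T : ℕ) (A : Finset V) : escProb G x T A ≤ 1 :=
  le_trans (escProb_le_pathMass G x T A) (pathMass_le_one G x T)

lemma escProb_zero_mem (x : V) (A : Finset V) (hx : x ∈ A) : escProb G x 0 A = 0 := by
  unfold escProb
  refine Finset.sum_eq_zero fun v _ => ?_
  rw [if_neg]
  rintro ⟨h0, j, hj⟩
  have : j = 0 := Fin.fin_one_eq_zero j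
  rw [this, h0] at hj
  exact hj hx

lemma escProb_succ (x : V) (T : ℕ) (A : Finset V) (hx : x ∈ A) :
    escProb G x (T+1) A = ∑ y : V, walkP G x y * escProb G y T A := by
  unfold escProb
  rw [sum_paths_succ]
  have lhs : ∀ y : V, (∑ w : Fin (T+1) → V,
      if (Fin.cons y w : Fin (T+2) → V) 0 = x ∧
          ∃ j : Fin (T+2), (Fin.cons y w : Fin (T+2) → V) j ∉ A
      then ∏ j : Fin (T+1), walkP G ((Fin.cons y w : Fin (T+2) → V) j.castSucc)
        ((Fin.cons y w : Fin (T+2) → V) j.succ) else 0)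
      = if y = x then ∑ w : Fin (T+1) → V,
          (if ∃ j : Fin (T+1), w j ∉ A
            then walkP G y (w 0) * ∏ j : Fin T, walkP G (w j.castSucc) (w j.succ) else 0)
        else 0 := by
    intro y
    split_ifs with h
    · refine Finset.sum_congr rfl fun w _ => ?_
      have hcond : ((Fin.cons y w : Fin (T+2) → V) 0 = x ∧
          ∃ j : Fin (T+2), (Fin.cons y w : Fin (T+2) → V) j ∉ A)
          ↔ (∃ j : Fin (T+1), w j ∉ A) := by
        subst h
        rw [Fin.cons_zero]
        simp only [true_and]
        rw [Fin.exists_fin_succ]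
        simp only [Fin.cons_zero, Fin.cons_succ, hx, not_true_eq_false, false_or]
      rw [if_congr hcond (prod_cons G y w) rfl]
    · refine Finset.sum_eq_zero fun w _ => ?_
      rw [if_neg]
      rw [Fin.cons_zero]
      exact fun hc => h hc.1
  rw [Finset.sum_congr rfl fun y _ => lhs y, Finset.sum_ite_eq' Finset.univ x,
    if_pos (Finset.mem_univ x)]
  have rhs : ∀ y : V, (walkP G x y * ∑ w : Fin (T+1) → V,
      if w 0 = y ∧ ∃ j : Fin (T+1), w j ∉ A
      then ∏ j : Fin T, walkP G (w j.castSucc) (w j.succ) else 0)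
      = ∑ w : Fin (T+1) → V,
        if w 0 = y ∧ ∃ j : Fin (T+1), w j ∉ A
        then walkP G x y * ∏ j : Fin T, walkP G (w j.castSucc) (w j.succ) else 0 := by
    intro y
    rw [Finset.mul_sum]
    exact Finset.sum_congr rfl fun w _ => by rw [mul_ite, mul_zero]
  rw [Finset.sum_congr rfl fun y _ => rhs y, Finset.sum_comm]
  refine Finset.sum_congr rfl fun w _ => ?_
  by_cases hE : ∃ j : Fin (T+1), w j ∉ A
  · rw [if_pos hE]
    have : ∀ y : V, (if w 0 = y ∧ ∃ j : Fin (T+1), w j ∉ A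
        then walkP G x y * ∏ j : Fin T, walkP G (w j.castSucc) (w j.succ) else 0)
        = if w 0 = y then walkP G x y * ∏ j : Fin T, walkP G (w j.castSucc) (w j.succ)
          else 0 := by
      intro y
      by_cases hy : w 0 = y
      · simp [hy, hE]
      · simp [hy]
    rw [Finset.sum_congr rfl fun y _ => this y, Finset.sum_ite_eq Finset.univ (w 0),
      if_pos (Finset.mem_univ _)]
  · rw [if_neg hE]
    exact (Finset.sum_eq_zero fun y _ => by rw [if_neg fun hc => hE hc.2]).symm

lemma deg_mul_pset (A : Finset V) (y : V) (hy : y ∉ A) :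
    (G.degree y : ℝ) * pset G y A = ((A.filter (G.Adj y)).card : ℝ) / 2 := by
  unfold pset
  have h1 : ∀ z ∈ A, walkP G y z = if G.Adj y z then 1 / (2 * (G.degree y : ℝ)) else 0 := by
    intro z hz
    have : y ≠ z := fun h => hy (h ▸ hz)
    simp [walkP, this]
  rw [Finset.sum_congr rfl h1, Finset.sum_ite, Finset.sum_const_zero, add_zero,
    Finset.sum_const, nsmul_eq_mul]
  rcases Nat.eq_zero_or_pos (A.filter (G.Adj y)).card with h | h
  · simp [h]
  · obtain ⟨z, hz⟩ := Finset.card_pos.mp h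
    have hadj := (Finset.mem_filter.mp hz).2
    have hd : (G.degree y : ℝ) ≠ 0 := by
      have := G.degree_pos_iff_exists_adj y |>.mpr ⟨z, hadj⟩
      positivity
    field_simp

lemma double_count (A : Finset V) :
    ∑ y ∈ Aᶜ, ((A.filter (G.Adj y)).card : ℝ) = bdry G A := by
  unfold bdry
  have h1 : ∀ y, ((A.filter (G.Adj y)).card : ℝ) = ∑ z ∈ A, if G.Adj y z then (1:ℝ) else 0 :=
    fun y => Finset.natCast_card_filter _ _
  have h2 : ∀ x, ((Aᶜ.filter (G.Adj x)).card : ℝ) = ∑ y ∈ Aᶜ, if G.Adj x y then (1:ℝ) else 0 :=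
    fun x => Finset.natCast_card_filter _ _
  rw [Finset.sum_congr rfl fun y _ => h1 y, Finset.sum_congr rfl fun x _ => h2 x,
    Finset.sum_comm]
  refine Finset.sum_congr rfl fun z _ => Finset.sum_congr rfl fun y _ => ?_
  simp [G.adj_comm]

lemma key_bound (A : Finset V) (T : ℕ) :
    ∑ x ∈ A, (G.degree x : ℝ) * escProb G x T A ≤ T * bdry G A / 2 := by
  induction T with
  | zero =>
    rw [Finset.sum_congr rfl fun x hx => by rw [escProb_zero_mem G x A hx, mul_zero]]
    simp
  | succ T ih =>
    have step : ∑ x ∈ A, (G.degree x : ℝ) * escProb G x (T+1) A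
        = ∑ y : V, (G.degree y : ℝ) * escProb G y T A * pset G y A := by
      have h1 : ∀ x ∈ A, (G.degree x : ℝ) * escProb G x (T+1) A
          = ∑ y : V, (G.degree y : ℝ) * walkP G y x * escProb G y T A := by
        intro x hx
        rw [escProb_succ G x T A hx, Finset.mul_sum]
        refine Finset.sum_congr rfl fun y _ => ?_
        rw [← mul_assoc, walkP_rev, mul_assoc, mul_comm (walkP G y x), ← mul_assoc]
      rw [Finset.sum_congr rfl h1, Finset.sum_comm]
      refine Finset.sum_congr rfl fun y _ => ?_
      unfold pset
      rw [Finset.mul_sum]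
      refine Finset.sum_congr rfl fun x _ => ?_
      ring
    rw [step, ← Finset.sum_add_sum_compl A]
    have hin : ∑ y ∈ A, (G.degree y : ℝ) * escProb G y T A * pset G y A
        ≤ T * bdry G A / 2 := by
      refine le_trans (Finset.sum_le_sum fun y hy => ?_) ih
      have h0 : 0 ≤ (G.degree y : ℝ) * escProb G y T A := by
        have := escProb_nonneg G y T A
        positivity
      calc (G.degree y : ℝ) * escProb G y T A * pset G y A
          ≤ (G.degree y : ℝ) * escProb G y T A * 1 :=
            mul_le_mul_of_nonneg_left (pset_le_one G y A) h0
        _ = (G.degree y : ℝ) * escProb G y T A := mul_one _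
    have hout : ∑ y ∈ Aᶜ, (G.degree y : ℝ) * escProb G y T A * pset G y A
        ≤ bdry G A / 2 := by
      have h1 : ∀ y ∈ Aᶜ, (G.degree y : ℝ) * escProb G y T A * pset G y A
          ≤ ((A.filter (G.Adj y)).card : ℝ) / 2 := by
        intro y hy
        have hyA : y ∉ A := Finset.mem_compl.mp hy
        calc (G.degree y : ℝ) * escProb G y T A * pset G y A
            ≤ (G.degree y : ℝ) * 1 * pset G y A := by
              refine mul_le_mul_of_nonneg_right ?_ (pset_nonneg G y A)
              exact mul_le_mul_of_nonneg_left (escProb_le_one G y T A) (by positivity)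
          _ = (G.degree y : ℝ) * pset G y A := by rw [mul_one]
          _ = ((A.filter (G.Adj y)).card : ℝ) / 2 := deg_mul_pset G A y hyA
      calc ∑ y ∈ Aᶜ, (G.degree y : ℝ) * escProb G y T A * pset G y A
          ≤ ∑ y ∈ Aᶜ, ((A.filter (G.Adj y)).card : ℝ) / 2 := Finset.sum_le_sum h1
        _ = (∑ y ∈ Aᶜ, ((A.filter (G.Adj y)).card : ℝ)) / 2 := by
            rw [Finset.sum_div]
        _ = bdry G A / 2 := by rw [double_count]
    calc _ ≤ T * bdry G A / 2 + bdry G A / 2 := add_le_add hin hout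
      _ = (T+1 : ℕ) * bdry G A / 2 := by push_cast; ring

lemma bdry_nonneg (A : Finset V) : 0 ≤ bdry G A :=
  Finset.sum_nonneg fun x _ => by positivity

end Aux

/-- The volume-weighted average escape probability from a nonempty set `A` within `T`
steps of the lazy random walk is at most `T φ(A)/2`:
`(1/μ(A)) Σ_{x∈A} d(x) esc(x,T,A) ≤ T φ(A)/2`. -/
theorem statement11 (G : SimpleGraph V) [DecidableRel G.Adj]
    (A : Finset V) (hA : A.Nonempty) (T : ℕ) :
    (1 / vol G A) * ∑ x ∈ A, (G.degree x : ℝ) * escProb G x T A ≤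
      T * phiCond G A / 2 := by
  have hvol : 0 ≤ vol G A := Finset.sum_nonneg fun x _ => by positivity
  rcases eq_or_lt_of_le hvol with h0 | hpos
  · have hdeg : ∀ x ∈ A, (G.degree x : ℝ) = 0 := by
      intro x hx
      have := (Finset.sum_eq_zero_iff_of_nonneg (fun x _ => by positivity)).mp h0.symm x hx
      exact this
    have hS : ∑ x ∈ A, (G.degree x : ℝ) * escProb G x T A = 0 :=
      Finset.sum_eq_zero fun x hx => by rw [hdeg x hx, zero_mul]
    rw [hS, mul_zero]
    have : 0 ≤ phiCond G A := by
      unfold phiCond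
      rw [← h0]
      simp
    positivity
  · have key := key_bound G A T
    have hrw : (T : ℝ) * phiCond G A / 2 = (T * bdry G A / 2) / vol G A := by
      unfold phiCond
      ring
    rw [hrw, one_div, inv_mul_eq_div]
    exact div_le_div_of_nonneg_right key hpos.le
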